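/- Let X be a connected graph of order at least 3 and let s ≥ 3. Then the Cartesian product K_{1,s} □ X (the star with s leaves times X) is not well-dominated. -/

import Mathlib

open SimpleGraph

/-- `S` dominates `G`: every vertex is in `S` or adjacent to a vertex of `S`. -/
def Dominates {V : Type*} (G : SimpleGraph V) (S : Set V) : Prop :=
  ∀ v : V, v ∈ S ∨ ∃ u ∈ S, G.Adj u v

/-- `S` is a minimal dominating set of `G`. -/
def MinDom {V : Type*} (G : SimpleGraph V) (S : Set V) : Prop :=
  Dominates G S ∧ ∀ T : Set V, T ⊂ S → ¬ Dominates G T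

/-- `G` is well-dominated: all minimal dominating sets have the same cardinality. -/
def WellDom {V : Type*} (G : SimpleGraph V) : Prop :=
  ∀ S T : Set V, MinDom G S → MinDom G T → S.ncard = T.ncard

/-- `I` is an independent set of `G`. -/
def IndepSet {V : Type*} (G : SimpleGraph V) (I : Set V) : Prop :=
  ∀ a ∈ I, ∀ b ∈ I, ¬ G.Adj a b

/-- `I` is a maximal independent set of `G`. -/
def MaxIndep {V : Type*} (G : SimpleGraph V) (I : Set V) : Prop :=
  IndepSet G I ∧ ∀ J : Set V, IndepSet G J → I ⊆ J → J = I

/-- The closed neighborhood `N[S]` of a set of vertices. -/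
def closedNbhd {V : Type*} (G : SimpleGraph V) (S : Set V) : Set V :=
  {v | v ∈ S ∨ ∃ u ∈ S, G.Adj u v}

section AuxLemmas

variable {V : Type*} {G : SimpleGraph V}

private lemma indep_insert' {I : Set V} {v : V} (h : IndepSet G I)
    (hadj : ∀ u ∈ I, ¬ G.Adj u v) : IndepSet G (insert v I) := by
  intro a ha b hb hab
  rcases Set.mem_insert_iff.1 ha with ha' | ha' <;>
    rcases Set.mem_insert_iff.1 hb with hb' | hb'
  · exact G.irrefl (ha' ▸ hb' ▸ hab)
  · exact hadj b hb' (ha' ▸ hab).symm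
  · exact hadj a ha' (hb' ▸ hab)
  · exact h a ha' b hb' hab

private lemma exists_minDom_subset'' [Finite V] : ∀ (n : ℕ) (S : Set V), S.ncard ≤ n →
    Dominates G S → ∃ T ⊆ S, MinDom G T := by
  intro n
  induction n with
  | zero =>
    intro S hc h
    refine ⟨S, subset_rfl, h, ?_⟩
    intro T hT _
    have := Set.ncard_lt_ncard hT (Set.toFinite S)
    omega
  | succ n ih =>
    intro S hc h
    by_cases hmin : ∀ T : Set V, T ⊂ S → ¬ Dominates G T
    · exact ⟨S, subset_rfl, h, hmin⟩
    · push_neg at hmin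
      obtain ⟨T, hTS, hTdom⟩ := hmin
      have hlt := Set.ncard_lt_ncard hTS (Set.toFinite S)
      obtain ⟨U, hUT, hU⟩ := ih T (by omega) hTdom
      exact ⟨U, hUT.trans hTS.subset, hU⟩

private lemma exists_minDom_subset' [Finite V] (S : Set V) (h : Dominates G S) :
    ∃ T ⊆ S, MinDom G T :=
  exists_minDom_subset'' S.ncard S le_rfl h

private lemma maxIndep_minDom' {I : Set V} (h : MaxIndep G I) : MinDom G I := by
  obtain ⟨hind, hmax⟩ := h
  have hdom : Dominates G I := by
    intro v
    by_cases hv : v ∈ I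
    · exact Or.inl hv
    by_cases hadj : ∃ u ∈ I, G.Adj u v
    · exact Or.inr hadj
    exfalso
    push_neg at hadj
    have heq := hmax _ (indep_insert' hind hadj) (Set.subset_insert _ _)
    exact hv (heq ▸ Set.mem_insert v I)
  refine ⟨hdom, ?_⟩
  intro T hT hTdom
  obtain ⟨x, hxI, hxT⟩ := Set.exists_of_ssubset hT
  rcases hTdom x with hx | ⟨u, huT, hadj⟩
  · exact hxT hx
  · exact hind u (hT.subset huT) x hxI hadj

private lemma exists_maxIndep_ext' [Finite V] {I : Set V} (h : IndepSet G I) :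
    ∃ J, I ⊆ J ∧ MaxIndep G J := by
  obtain ⟨J, hJ, hJmax⟩ := Set.Finite.exists_maximalFor id {J : Set V | IndepSet G J ∧ I ⊆ J}
    (Set.toFinite _) ⟨I, h, subset_rfl⟩
  refine ⟨J, hJ.2, hJ.1, ?_⟩
  intro K hK hJK
  exact (Set.Subset.antisymm hJK (hJmax ⟨hK, hJ.2.trans hJK⟩ hJK)).symm

private lemma exists_relMaxIndep' [Finite V] (A : Set V) :
    ∃ K ⊆ A, IndepSet G K ∧ ∀ v ∈ A, v ∉ K → ∃ u ∈ K, G.Adj u v := by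
  obtain ⟨K, hK, hmax⟩ := Set.Finite.exists_maximalFor id {K : Set V | K ⊆ A ∧ IndepSet G K}
    (Set.toFinite _) ⟨∅, Set.empty_subset _, fun a ha => absurd ha (Set.notMem_empty a)⟩
  refine ⟨K, hK.1, hK.2, ?_⟩
  intro v hvA hvK
  by_contra hno
  push_neg at hno
  have hins : insert v K ∈ {K : Set V | K ⊆ A ∧ IndepSet G K} :=
    ⟨Set.insert_subset hvA hK.1, indep_insert' hK.2 hno⟩
  have heq : id (insert v K) = id K :=
    Set.Subset.antisymm (hmax hins (Set.subset_insert _ _)) (Set.subset_insert _ _)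
  simp only [id_eq] at heq
  exact hvK (heq ▸ Set.mem_insert v K)

private lemma ncard_sprod' {α β : Type*} (s : Set α) (t : Set β) :
    (s ×ˢ t).ncard = s.ncard * t.ncard := by
  rw [← Nat.card_coe_set_eq, ← Nat.card_coe_set_eq, ← Nat.card_coe_set_eq,
    ← Nat.card_prod]
  exact Nat.card_congr (Equiv.Set.prod s t)

end AuxLemmas

theorem stmt10 {V : Type*} [Fintype V] (X : SimpleGraph V)
    (hconn : X.Connected) (hcard : 3 ≤ Fintype.card V)
    (s : ℕ) (hs : 3 ≤ s) :
    ¬ WellDom (completeBipartiteGraph (Fin 1) (Fin s) □ X) := by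
  intro W
  classical
  set n := Fintype.card V with hn
  set G2 := completeBipartiteGraph (Fin 1) (Fin s) □ X with hG2
  have i0' : Fin s := ⟨0, by omega⟩
  -- The center fiber D1 is a minimal dominating set of cardinality n.
  set D1 : Set ((Fin 1 ⊕ Fin s) × V) := {p | p.1 = Sum.inl 0} with hD1def
  have hD1dom : Dominates G2 D1 := by
    rintro ⟨a, v⟩
    rcases a with i | i
    · exact Or.inl (by simp [hD1def, Subsingleton.elim i 0])
    · refine Or.inr ⟨(Sum.inl 0, v), by simp [hD1def], ?_⟩
      simp [hG2, SimpleGraph.boxProd_adj, completeBipartiteGraph]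
  have hD1min : MinDom G2 D1 := by
    refine ⟨hD1dom, ?_⟩
    intro T hT hTdom
    obtain ⟨q, hqD, hqT⟩ := Set.exists_of_ssubset hT
    obtain ⟨a, v0⟩ := q
    have ha : a = Sum.inl 0 := hqD
    subst ha
    rcases hTdom (Sum.inr i0', v0) with hmem | ⟨u, huT, hadj⟩
    · have := hT.subset hmem
      simp [hD1def] at this
    · have hu1 : u.1 = Sum.inl 0 := hT.subset huT
      obtain ⟨b, w⟩ := u
      simp only at hu1
      subst hu1
      rw [hG2] at hadj
      simp only [SimpleGraph.boxProd_adj, completeBipartiteGraph] at hadj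
      rcases hadj with ⟨_, h2⟩ | ⟨_, h2⟩
      · subst h2
        exact hqT huT
      · simp at h2
  have hD1card : D1.ncard = n := by
    have hset : D1 = ({Sum.inl 0} : Set (Fin 1 ⊕ Fin s)) ×ˢ (Set.univ : Set V) := by
      ext ⟨a, v⟩
      simp [hD1def, eq_comm]
    rw [hset, ncard_sprod']
    simp [Set.ncard_univ, hn]
  have hall : ∀ T, MinDom G2 T → T.ncard = n := fun T hT => (W T D1 hT hD1min).trans hD1card
  -- Case split on maximum degree.
  by_cases hdeg : ∃ v0 : V, s < (X.neighborSet v0).ncard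
  · -- Large degree: a dominating set of size < n.
    obtain ⟨v0, hv0⟩ := hdeg
    set NN : Set V := insert v0 (X.neighborSet v0) with hNN
    set T : Set ((Fin 1 ⊕ Fin s) × V) :=
      ((Set.univ : Set (Fin 1 ⊕ Fin s)) ×ˢ ({v0} : Set V)) ∪
        (({Sum.inl 0} : Set (Fin 1 ⊕ Fin s)) ×ˢ NNᶜ) with hT
    have hTdom : Dominates G2 T := by
      rintro ⟨a, v⟩
      by_cases hv : v = v0
      · exact Or.inl (Or.inl ⟨Set.mem_univ _, hv⟩)
      by_cases hv2 : X.Adj v0 v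
      · refine Or.inr ⟨(a, v0), Or.inl ⟨Set.mem_univ _, rfl⟩, ?_⟩
        rw [hG2]
        exact Or.inr ⟨hv2, rfl⟩
      have hvNN : v ∈ NNᶜ := by
        simp only [hNN, Set.mem_compl_iff, Set.mem_insert_iff, SimpleGraph.mem_neighborSet]
        push_neg
        exact ⟨hv, hv2⟩
      rcases a with i | i
      · exact Or.inl (Or.inr ⟨by simp [Subsingleton.elim i 0], hvNN⟩)
      · refine Or.inr ⟨(Sum.inl 0, v), Or.inr ⟨rfl, hvNN⟩, ?_⟩
        rw [hG2]
        exact Or.inl ⟨by simp [completeBipartiteGraph], rfl⟩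
    have hNNcard : NN.ncard = (X.neighborSet v0).ncard + 1 := by
      rw [hNN, Set.ncard_insert_of_notMem (by simp) (Set.toFinite _)]
    have hNNle : NN.ncard ≤ n := by
      have := Set.ncard_le_ncard (Set.subset_univ NN) (Set.toFinite _)
      simpa [Set.ncard_univ, hn] using this
    have hcompl : NNᶜ.ncard = n - NN.ncard := by
      have h0 := Set.ncard_add_ncard_compl NN
      rw [Nat.card_eq_fintype_card, ← hn] at h0
      omega
    have hTcard : T.ncard ≤ n - 1 := by
      have h1 := Set.ncard_union_le ((Set.univ : Set (Fin 1 ⊕ Fin s)) ×ˢ ({v0} : Set V))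
        (({Sum.inl 0} : Set (Fin 1 ⊕ Fin s)) ×ˢ NNᶜ)
      rw [ncard_sprod', ncard_sprod'] at h1
      simp only [Set.ncard_univ, Set.ncard_singleton] at h1
      have hcardsum : Nat.card (Fin 1 ⊕ Fin s) = 1 + s := by simp
      rw [hcardsum, hcompl] at h1
      rw [hT]
      omega
    obtain ⟨T', hT'T, hT'⟩ := exists_minDom_subset' T hTdom
    have h2 := hall T' hT'
    have hle := Set.ncard_le_ncard hT'T (Set.toFinite T)
    omega
  · -- All degrees at most s.
    push_neg at hdeg
    -- Every maximal independent set J of X satisfies (s+1) * |J| = n.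
    have hsize : ∀ J, MaxIndep X J → (s + 1) * J.ncard = n := by
      intro J hJ
      obtain ⟨K, hKsub, hKind, hKmax⟩ := exists_relMaxIndep' (G := X) Jᶜ
      have hKJ : ∀ v, v ∈ K → v ∉ J := fun v hv => hKsub hv
      have hJdomv : ∀ v, v ∉ J → ∃ u ∈ J, X.Adj u v := by
        intro v hv
        rcases (maxIndep_minDom' hJ).1 v with h | h
        · exact absurd h hv
        · exact h
      set SJK : Set ((Fin 1 ⊕ Fin s) × V) :=
        (({Sum.inl 0} : Set (Fin 1 ⊕ Fin s)) ×ˢ J) ∪ ((Set.range Sum.inr) ×ˢ K) with hSJK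
      set SKJ : Set ((Fin 1 ⊕ Fin s) × V) :=
        (({Sum.inl 0} : Set (Fin 1 ⊕ Fin s)) ×ˢ K) ∪ ((Set.range Sum.inr) ×ˢ J) with hSKJ
      have hstar1 : ∀ i : Fin s,
          (completeBipartiteGraph (Fin 1) (Fin s)).Adj (Sum.inl 0) (Sum.inr i) := by
        intro i; simp [completeBipartiteGraph]
      have hstar2 : ∀ (a b : Fin 1), ¬ (completeBipartiteGraph (Fin 1) (Fin s)).Adj
          (Sum.inl a) (Sum.inl b) := by intro a b; simp [completeBipartiteGraph]
      have hstar3 : ∀ (a b : Fin s), ¬ (completeBipartiteGraph (Fin 1) (Fin s)).Adj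
          (Sum.inr a) (Sum.inr b) := by intro a b; simp [completeBipartiteGraph]
      have hindJK : IndepSet G2 SJK := by
        rintro ⟨a, v⟩ ha ⟨b, w⟩ hb hadj
        rw [hG2] at hadj
        rcases hadj with ⟨hst, hvw⟩ | ⟨hX, hab⟩
        · simp only at hst hvw
          subst hvw
          rcases ha with ⟨ha1, ha2⟩ | ⟨ha1, ha2⟩ <;> rcases hb with ⟨hb1, hb2⟩ | ⟨hb1, hb2⟩
          · rw [Set.mem_singleton_iff] at ha1 hb1; subst ha1; subst hb1; exact hstar2 0 0 hst
          · exact hKJ v hb2 ha2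
          · exact hKJ v ha2 hb2
          · obtain ⟨i, rfl⟩ := ha1; obtain ⟨j, rfl⟩ := hb1; exact hstar3 i j hst
        · simp only at hX hab
          subst hab
          rcases ha with ⟨ha1, ha2⟩ | ⟨ha1, ha2⟩ <;> rcases hb with ⟨hb1, hb2⟩ | ⟨hb1, hb2⟩
          · exact hJ.1 v ha2 w hb2 hX
          · rw [Set.mem_singleton_iff] at ha1; obtain ⟨j, hj⟩ := hb1; subst ha1; simp at hj
          · rw [Set.mem_singleton_iff] at hb1; obtain ⟨j, hj⟩ := ha1; subst hb1; simp at hj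
          · exact hKind v ha2 w hb2 hX
      have hmaxJK : MaxIndep G2 SJK := by
        refine ⟨hindJK, ?_⟩
        intro J' hJ' hsub
        refine Set.Subset.antisymm ?_ hsub
        rintro ⟨a, v⟩ hp
        by_contra hpS
        rcases a with i | i
        · have hi : i = 0 := Subsingleton.elim i 0
          subst hi
          have hvJ : v ∉ J := fun hvJ => hpS (Or.inl ⟨rfl, hvJ⟩)
          obtain ⟨u, huJ, hadj⟩ := hJdomv v hvJ
          exact hJ' (Sum.inl 0, u) (hsub (Or.inl ⟨rfl, huJ⟩)) (Sum.inl 0, v) hp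
            (by rw [hG2]; exact Or.inr ⟨hadj, rfl⟩)
        · have hvK : v ∉ K := fun hvK => hpS (Or.inr ⟨⟨i, rfl⟩, hvK⟩)
          by_cases hvJ : v ∈ J
          · exact hJ' (Sum.inl 0, v) (hsub (Or.inl ⟨rfl, hvJ⟩)) (Sum.inr i, v) hp
              (by rw [hG2]; exact Or.inl ⟨hstar1 i, rfl⟩)
          · obtain ⟨u, huK, hadj⟩ := hKmax v hvJ hvK
            exact hJ' (Sum.inr i, u) (hsub (Or.inr ⟨⟨i, rfl⟩, huK⟩)) (Sum.inr i, v) hp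
              (by rw [hG2]; exact Or.inr ⟨hadj, rfl⟩)
      have hindKJ : IndepSet G2 SKJ := by
        rintro ⟨a, v⟩ ha ⟨b, w⟩ hb hadj
        rw [hG2] at hadj
        rcases hadj with ⟨hst, hvw⟩ | ⟨hX, hab⟩
        · simp only at hst hvw
          subst hvw
          rcases ha with ⟨ha1, ha2⟩ | ⟨ha1, ha2⟩ <;> rcases hb with ⟨hb1, hb2⟩ | ⟨hb1, hb2⟩
          · rw [Set.mem_singleton_iff] at ha1 hb1; subst ha1; subst hb1; exact hstar2 0 0 hst
          · exact hKJ v ha2 hb2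
          · exact hKJ v hb2 ha2
          · obtain ⟨i, rfl⟩ := ha1; obtain ⟨j, rfl⟩ := hb1; exact hstar3 i j hst
        · simp only at hX hab
          subst hab
          rcases ha with ⟨ha1, ha2⟩ | ⟨ha1, ha2⟩ <;> rcases hb with ⟨hb1, hb2⟩ | ⟨hb1, hb2⟩
          · exact hKind v ha2 w hb2 hX
          · rw [Set.mem_singleton_iff] at ha1; obtain ⟨j, hj⟩ := hb1; subst ha1; simp at hj
          · rw [Set.mem_singleton_iff] at hb1; obtain ⟨j, hj⟩ := ha1; subst hb1; simp at hj
          · exact hJ.1 v ha2 w hb2 hX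
      have hmaxKJ : MaxIndep G2 SKJ := by
        refine ⟨hindKJ, ?_⟩
        intro J' hJ' hsub
        refine Set.Subset.antisymm ?_ hsub
        rintro ⟨a, v⟩ hp
        by_contra hpS
        rcases a with i | i
        · have hi : i = 0 := Subsingleton.elim i 0
          subst hi
          have hvK : v ∉ K := fun hvK => hpS (Or.inl ⟨rfl, hvK⟩)
          by_cases hvJ : v ∈ J
          · exact hJ' (Sum.inr ⟨0, by omega⟩, v) (hsub (Or.inr ⟨⟨_, rfl⟩, hvJ⟩)) (Sum.inl 0, v) hp
              (by rw [hG2]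
                  exact Or.inl ⟨by simpa using ((completeBipartiteGraph (Fin 1) (Fin s)).symm
                    (hstar1 ⟨0, by omega⟩)), rfl⟩)
          · obtain ⟨u, huK, hadj⟩ := hKmax v hvJ hvK
            exact hJ' (Sum.inl 0, u) (hsub (Or.inl ⟨rfl, huK⟩)) (Sum.inl 0, v) hp
              (by rw [hG2]; exact Or.inr ⟨hadj, rfl⟩)
        · have hvJ : v ∉ J := fun hvJ => hpS (Or.inr ⟨⟨i, rfl⟩, hvJ⟩)
          obtain ⟨u, huJ, hadj⟩ := hJdomv v hvJ
          exact hJ' (Sum.inr i, u) (hsub (Or.inr ⟨⟨i, rfl⟩, huJ⟩)) (Sum.inr i, v) hp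
            (by rw [hG2]; exact Or.inr ⟨hadj, rfl⟩)
      have hrange : (Set.range (Sum.inr : Fin s → Fin 1 ⊕ Fin s)).ncard = s := by
        rw [← Nat.card_coe_set_eq, Nat.card_range_of_injective Sum.inr_injective]
        simp
      have hdisj1 : Disjoint (({Sum.inl 0} : Set (Fin 1 ⊕ Fin s)) ×ˢ J)
          ((Set.range Sum.inr) ×ˢ K) := by
        rw [Set.disjoint_left]
        rintro ⟨a, v⟩ ⟨ha1, _⟩ ⟨hb1, _⟩
        rw [Set.mem_singleton_iff] at ha1
        obtain ⟨j, hj⟩ := hb1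
        subst ha1
        simp at hj
      have hdisj2 : Disjoint (({Sum.inl 0} : Set (Fin 1 ⊕ Fin s)) ×ˢ K)
          ((Set.range Sum.inr) ×ˢ J) := by
        rw [Set.disjoint_left]
        rintro ⟨a, v⟩ ⟨ha1, _⟩ ⟨hb1, _⟩
        rw [Set.mem_singleton_iff] at ha1
        obtain ⟨j, hj⟩ := hb1
        subst ha1
        simp at hj
      have hc1 : SJK.ncard = J.ncard + s * K.ncard := by
        rw [hSJK, Set.ncard_union_eq hdisj1 (Set.toFinite _) (Set.toFinite _),
          ncard_sprod', ncard_sprod', hrange, Set.ncard_singleton, one_mul]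
      have hc2 : SKJ.ncard = K.ncard + s * J.ncard := by
        rw [hSKJ, Set.ncard_union_eq hdisj2 (Set.toFinite _) (Set.toFinite _),
          ncard_sprod', ncard_sprod', hrange, Set.ncard_singleton, one_mul]
      have e1 : J.ncard + s * K.ncard = n := hc1 ▸ hall SJK (maxIndep_minDom' hmaxJK)
      have e2 : K.ncard + s * J.ncard = n := hc2 ▸ hall SKJ (maxIndep_minDom' hmaxKJ)
      have heq : J.ncard = K.ncard := by
        rcases le_total J.ncard K.ncard with h | h
        · obtain ⟨k, hk⟩ := Nat.exists_eq_add_of_le h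
          have h3 := Nat.mul_le_mul_right k hs
          rw [hk] at e1 e2
          rw [Nat.mul_add] at e1
          omega
        · obtain ⟨k, hk⟩ := Nat.exists_eq_add_of_le h
          have h3 := Nat.mul_le_mul_right k hs
          rw [hk] at e1 e2
          rw [Nat.mul_add] at e2
          omega
      have hring : (s + 1) * J.ncard = J.ncard + s * J.ncard := by ring
      rw [hring, heq]
      rw [heq] at e1
      exact e1
    -- Closed neighborhoods of distinct vertices of a maximal independent set are disjoint.
    have hdisjN : ∀ J, MaxIndep X J → ∀ x ∈ J, ∀ z ∈ J, x ≠ z → ∀ a,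
        a ∈ insert x (X.neighborSet x) → a ∈ insert z (X.neighborSet z) → False := by
      intro J hJ x hx z hz hxz a hax haz
      have hsizeJ := hsize J hJ
      set NX : V → Set V := fun w => insert w (X.neighborSet w) with hNX
      have hdom := (maxIndep_minDom' hJ).1
      set JF : Finset V := (Set.toFinite (J \ {x})).toFinset with hJF
      set B : Finset V := JF.biUnion (fun w => (Set.toFinite (NX w)).toFinset) with hB
      set C : Finset V := (Set.toFinite (NX x \ {a})).toFinset with hC
      have hcover : (Finset.univ : Finset V) ⊆ B ∪ C := by
        intro v _
        obtain ⟨w, hwJ, hvw⟩ : ∃ w ∈ J, v ∈ NX w := by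
          rcases hdom v with h | ⟨u, huJ, hadj⟩
          · exact ⟨v, h, Set.mem_insert _ _⟩
          · exact ⟨u, huJ, Set.mem_insert_of_mem _ hadj⟩
        by_cases hwx : w = x
        · subst hwx
          by_cases hva : v = a
          · subst hva
            refine Finset.mem_union_left _ (Finset.mem_biUnion.2 ⟨z, ?_, ?_⟩)
            · simp only [hJF, Set.Finite.mem_toFinset, Set.mem_diff, Set.mem_singleton_iff]
              exact ⟨hz, Ne.symm hxz⟩
            · simp only [Set.Finite.mem_toFinset]
              exact haz
          · refine Finset.mem_union_right _ ?_
            simp only [hC, Set.Finite.mem_toFinset, Set.mem_diff, Set.mem_singleton_iff]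
            exact ⟨hvw, hva⟩
        · refine Finset.mem_union_left _ (Finset.mem_biUnion.2 ⟨w, ?_, ?_⟩)
          · simp only [hJF, Set.Finite.mem_toFinset, Set.mem_diff, Set.mem_singleton_iff]
            exact ⟨hwJ, hwx⟩
          · simp only [Set.Finite.mem_toFinset]
            exact hvw
      have hNXcard : ∀ w, (NX w).ncard ≤ s + 1 := by
        intro w
        have h1 : (NX w).ncard ≤ (X.neighborSet w).ncard + 1 := Set.ncard_insert_le _ _
        have h2 := hdeg w
        omega
      have hncov : n ≤ B.card + C.card := by
        have h1 := Finset.card_le_card hcover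
        have h2 := Finset.card_union_le B C
        have hu : (Finset.univ : Finset V).card = n := by simp [hn]
        omega
      have hBcard : B.card ≤ JF.card * (s + 1) := by
        calc B.card ≤ ∑ w ∈ JF, (Set.toFinite (NX w)).toFinset.card := Finset.card_biUnion_le
        _ ≤ JF.card * (s + 1) := by
            apply Finset.sum_le_card_nsmul
            intro w _
            rw [← Set.ncard_eq_toFinset_card]
            exact hNXcard w
      have hJFcard : JF.card = J.ncard - 1 := by
        rw [hJF, ← Set.ncard_eq_toFinset_card]
        rw [Set.ncard_diff_singleton_of_mem hx]
      have hCcard : C.card ≤ s := by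
        rw [hC, ← Set.ncard_eq_toFinset_card]
        have h1 : (NX x \ {a}).ncard = (NX x).ncard - 1 := Set.ncard_diff_singleton_of_mem hax
        have h2 := hNXcard x
        have h3 : 0 < (NX x).ncard := (Set.ncard_pos (Set.toFinite _)).2 ⟨a, hax⟩
        omega
      have hα : 1 ≤ J.ncard := (Set.ncard_pos (Set.toFinite _)).2 ⟨x, hx⟩
      have hmul : (J.ncard - 1) * (s + 1) + (s + 1) = J.ncard * (s + 1) := by
        have h4 : (J.ncard - 1) + 1 = J.ncard := Nat.sub_add_cancel hα
        calc (J.ncard - 1) * (s + 1) + (s + 1) = ((J.ncard - 1) + 1) * (s + 1) := by ring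
        _ = J.ncard * (s + 1) := by rw [h4]
      have hcomm : J.ncard * (s + 1) = (s + 1) * J.ncard := Nat.mul_comm _ _
      rw [hJFcard] at hBcard
      generalize hP : (J.ncard - 1) * (s + 1) = P at hBcard hmul
      generalize hQ : J.ncard * (s + 1) = Q at hmul hcomm
      omega
    -- X is complete.
    have hcompl : ∀ x y : V, x ≠ y → X.Adj x y := by
      set NX : V → Set V := fun w => insert w (X.neighborSet w) with hNX
      have hsub : ∀ x y : V, X.Adj x y → NX x ⊆ NX y := by
        intro x y hxy
        obtain ⟨J, hxJ', hJ⟩ := exists_maxIndep_ext' (G := X) (I := {x})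
          (by rintro a rfl b rfl h; exact X.irrefl h)
        have hxJ : x ∈ J := hxJ' rfl
        have hyJ : y ∉ J := fun hyJ => hJ.1 x hxJ y hyJ hxy
        set M : Set V := insert y (J \ {x}) with hM
        have hyJx : y ∉ J \ {x} := fun h => hyJ h.1
        have hMind : IndepSet X M := by
          intro a ha b hb hab
          rcases Set.mem_insert_iff.1 ha with ha' | ha' <;>
            rcases Set.mem_insert_iff.1 hb with hb' | hb'
          · exact X.irrefl (ha' ▸ hb' ▸ hab)
          · subst ha'
            refine hdisjN J hJ x hxJ b hb'.1 (fun h => hb'.2 h.symm) a ?_ ?_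
            · exact Set.mem_insert_of_mem _ hxy
            · exact Set.mem_insert_of_mem _ hab.symm
          · subst hb'
            refine hdisjN J hJ x hxJ a ha'.1 (fun h => ha'.2 h.symm) b ?_ ?_
            · exact Set.mem_insert_of_mem _ hxy
            · exact Set.mem_insert_of_mem _ hab
          · exact hJ.1 a ha'.1 b hb'.1 hab
        have hα : 1 ≤ J.ncard := (Set.ncard_pos (Set.toFinite _)).2 ⟨x, hxJ⟩
        have hMcard : M.ncard = J.ncard := by
          rw [hM, Set.ncard_insert_of_notMem hyJx (Set.toFinite _),
            Set.ncard_diff_singleton_of_mem hxJ]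
          omega
        obtain ⟨M', hMM', hM'⟩ := exists_maxIndep_ext' hMind
        have h1 := hsize J hJ
        have h2 := hsize M' hM'
        have hM'card : M'.ncard = M.ncard := by
          rw [hMcard]
          exact Nat.eq_of_mul_eq_mul_left (show 0 < s + 1 by omega) (h2.trans h1.symm)
        have hMeq : M = M' :=
          Set.eq_of_subset_of_ncard_le hMM' (le_of_eq hM'card) (Set.toFinite _)
        intro v hv
        rcases (maxIndep_minDom' (hMeq ▸ hM')).1 v with hvM | ⟨u, huM, hadj⟩
        · rcases Set.mem_insert_iff.1 hvM with hv' | hv'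
          · exact hv' ▸ Set.mem_insert _ _
          · exact absurd hv (fun hvx =>
              hdisjN J hJ x hxJ v hv'.1 (fun h => hv'.2 h.symm) v hvx (Set.mem_insert _ _))
        · rcases Set.mem_insert_iff.1 huM with hu' | hu'
          · subst hu'
            exact Set.mem_insert_of_mem _ hadj
          · exact absurd hv (fun hvx =>
              hdisjN J hJ x hxJ u hu'.1 (fun h => hu'.2 h.symm) v hvx
                (Set.mem_insert_of_mem _ hadj))
      have heqN : ∀ x y : V, X.Adj x y → NX x = NX y :=
        fun x y hxy => Set.Subset.antisymm (hsub x y hxy) (hsub y x hxy.symm)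
      have hwalk : ∀ x y : V, X.Reachable x y → NX x = NX y := by
        intro x y hr
        obtain ⟨w⟩ := hr
        induction w with
        | nil => rfl
        | cons h p ih => exact (heqN _ _ h).trans ih
      intro x y hxy
      have h1 : NX x = NX y := hwalk x y (hconn x y)
      have h2 : y ∈ NX x := h1 ▸ Set.mem_insert _ _
      rcases Set.mem_insert_iff.1 h2 with h3 | h3
      · exact absurd h3.symm hxy
      · exact h3
    -- Complete case: explicit minimal dominating set of size n + s - 2 > n.
    have hne : Nonempty V := Fintype.card_pos_iff.mp (by omega)
    obtain ⟨v0⟩ := hne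
    have hnontriv : Nontrivial V := Fintype.one_lt_card_iff_nontrivial.mp (by omega)
    obtain ⟨w1, hw1⟩ := exists_ne v0
    set i0 : Fin s := ⟨0, by omega⟩ with hi0
    set i1 : Fin s := ⟨1, by omega⟩ with hi1
    have hi01 : i1 ≠ i0 := by
      intro h
      rw [hi0, hi1] at h
      exact absurd (Fin.mk.injEq .. ▸ h) (by simp)
    set D2 : Set ((Fin 1 ⊕ Fin s) × V) :=
      (({Sum.inr i0} : Set (Fin 1 ⊕ Fin s)) ×ˢ ({v0}ᶜ : Set V)) ∪
        (((Set.range Sum.inr \ {Sum.inr i0}) : Set (Fin 1 ⊕ Fin s)) ×ˢ ({v0} : Set V))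
      with hD2
    have hmemr : ∀ p : (Fin 1 ⊕ Fin s) × V, p ∈ D2 → ∃ j : Fin s, p.1 = Sum.inr j := by
      rintro ⟨a, v⟩ hp
      rcases hp with ⟨h1, _⟩ | ⟨h1, _⟩
      · exact ⟨i0, h1⟩
      · obtain ⟨j, hj⟩ := h1.1
        exact ⟨j, hj.symm⟩
    have hdom : Dominates G2 D2 := by
      rintro ⟨a, v⟩
      rcases a with i | i
      · by_cases hv : v = v0
        · refine Or.inr ⟨(Sum.inr i1, v0), Or.inr ⟨⟨⟨i1, rfl⟩, by simp [hi01]⟩, rfl⟩, ?_⟩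
          rw [hG2]
          exact Or.inl ⟨by simp [completeBipartiteGraph], hv.symm⟩
        · refine Or.inr ⟨(Sum.inr i0, v), Or.inl ⟨rfl, hv⟩, ?_⟩
          rw [hG2]
          exact Or.inl ⟨by simp [completeBipartiteGraph], rfl⟩
      · by_cases hii : i = i0
        · by_cases hv : v = v0
          · refine Or.inr ⟨(Sum.inr i, w1), Or.inl ⟨by simp [hii], by simp [hw1]⟩, ?_⟩
            rw [hG2]
            exact Or.inr ⟨hcompl w1 v (fun h => hw1 (h.trans hv)), rfl⟩
          · exact Or.inl (Or.inl ⟨by simp [hii], hv⟩)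
        · by_cases hv : v = v0
          · exact Or.inl (Or.inr ⟨⟨⟨i, rfl⟩, by simp [hii]⟩, hv⟩)
          · refine Or.inr ⟨(Sum.inr i, v0), Or.inr ⟨⟨⟨i, rfl⟩, by simp [hii]⟩, rfl⟩, ?_⟩
            rw [hG2]
            exact Or.inr ⟨hcompl v0 v (Ne.symm hv), rfl⟩
    have hmin : MinDom G2 D2 := by
      refine ⟨hdom, ?_⟩
      intro T hT hTdom
      obtain ⟨q, hqD, hqT⟩ := Set.exists_of_ssubset hT
      rcases hqD with ⟨h1, h2⟩ | ⟨h1, h2⟩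
      · obtain ⟨b, a⟩ := q
        rw [Set.mem_singleton_iff] at h1
        simp only at h1 h2
        subst h1
        rcases hTdom (Sum.inl 0, a) with hmem | ⟨u, huT, hadj⟩
        · obtain ⟨j, hj⟩ := hmemr _ (hT.subset hmem)
          simp at hj
        · rw [hG2] at hadj
          rcases hadj with ⟨hst, hvw⟩ | ⟨hX, hab⟩
          · obtain ⟨b', w⟩ := u
            simp only at hst hvw
            subst hvw
            rcases hT.subset huT with ⟨h1', h2'⟩ | ⟨h1', h2'⟩
            · rw [Set.mem_singleton_iff] at h1'
              simp only at h1'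
              subst h1'
              exact hqT huT
            · exact h2 h2'
          · obtain ⟨j, hj⟩ := hmemr _ (hT.subset huT)
            rw [hab] at hj
            simp at hj
      · obtain ⟨b, a⟩ := q
        simp only at h1 h2
        rw [Set.mem_singleton_iff] at h2
        obtain ⟨⟨j, hj⟩, hji⟩ := h1
        subst hj
        rcases hTdom (Sum.inr j, a) with hmem | ⟨u, huT, hadj⟩
        · exact hqT hmem
        · rw [hG2] at hadj
          rcases hadj with ⟨hst, hvw⟩ | ⟨hX, hab⟩
          · obtain ⟨j', hj'⟩ := hmemr _ (hT.subset huT)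
            rw [hj'] at hst
            simp [completeBipartiteGraph] at hst
          · obtain ⟨b', w⟩ := u
            simp only at hX hab
            subst hab
            rcases hT.subset huT with ⟨h1', h2'⟩ | ⟨h1', h2'⟩
            · exact hji h1'
            · rw [Set.mem_singleton_iff] at h2'
              have hw : w = v0 := h2'
              rw [hw, ← h2] at hX
              exact X.irrefl hX
    have hrange : (Set.range (Sum.inr : Fin s → Fin 1 ⊕ Fin s)).ncard = s := by
      rw [← Nat.card_coe_set_eq, Nat.card_range_of_injective Sum.inr_injective]
      simp
    have hcompl_card : ({v0}ᶜ : Set V).ncard = n - 1 := by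
      have h0 := Set.ncard_add_ncard_compl ({v0} : Set V)
      rw [Nat.card_eq_fintype_card, ← hn, Set.ncard_singleton] at h0
      omega
    have hdiff_card : ((Set.range Sum.inr \ {Sum.inr i0}) : Set (Fin 1 ⊕ Fin s)).ncard
        = s - 1 := by
      rw [Set.ncard_diff_singleton_of_mem (Set.mem_range_self i0), hrange]
    have hdisjD : Disjoint (({Sum.inr i0} : Set (Fin 1 ⊕ Fin s)) ×ˢ ({v0}ᶜ : Set V))
        (((Set.range Sum.inr \ {Sum.inr i0}) : Set (Fin 1 ⊕ Fin s)) ×ˢ ({v0} : Set V)) := by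
      rw [Set.disjoint_left]
      rintro ⟨a, v⟩ ⟨_, h2⟩ ⟨_, h2'⟩
      exact h2 h2'
    have hDcard : D2.ncard = (n - 1) + (s - 1) := by
      rw [hD2, Set.ncard_union_eq hdisjD (Set.toFinite _) (Set.toFinite _),
        ncard_sprod', ncard_sprod', hcompl_card, hdiff_card, Set.ncard_singleton,
        Set.ncard_singleton, one_mul, mul_one]
    have := hall D2 hmin
    omega
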